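/- For n ≥ k+2 ≥ 5, the affine dimension of the Newton polytope New(Z_{n,k}), i.e., the convex hull of S_{n,k} ⊂ ℝ^{n-k+1}, equals n−k−1. -/

import Mathlib

open Finset

lemma aux_sum_ite {M : Type*} [AddCommMonoid M] {N : ℕ} (a : ℕ) (ha : a < N)
    (s : Finset (Fin N)) (g : Fin N → M) :
    (∑ x ∈ s, if x.1 = a then g x else 0) = if (⟨a, ha⟩ : Fin N) ∈ s then g ⟨a, ha⟩ else 0 := by
  rw [← Finset.sum_ite_eq' s (⟨a, ha⟩ : Fin N) g]
  apply Finset.sum_congr rfl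
  intro x _
  by_cases h : x.1 = a
  · simp [h, Fin.ext_iff]
  · simp [h, Fin.ext_iff]

theorem newton_polytope_affine_dimension (n k : ℕ) (hk : 3 ≤ k) (hn : k + 2 ≤ n) :
    Module.finrank ℝ
      (affineSpan ℝ {x : Fin (n - k + 1) → ℝ | ∃ s : Fin (n - k + 1) → ℕ,
        (∑ i, i.1 * s i) = n - k ∧ (∑ i, s i) = k ∧
          x = fun i => (s i : ℝ)}).direction = n - k - 1 := by
  set m := n - k with hmdef
  have hm2 : 2 ≤ m := by omega
  set S : Set (Fin (m + 1) → ℝ) := {x : Fin (m + 1) → ℝ | ∃ s : Fin (m + 1) → ℕ,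
      (∑ i, i.1 * s i) = m ∧ (∑ i, s i) = k ∧ x = fun i => (s i : ℝ)} with hS
  rw [direction_affineSpan]
  -- the two linear functionals
  set f : (Fin (m+1) → ℝ) →ₗ[ℝ] ℝ :=
    { toFun := fun v => ∑ i, v i
      map_add' := by intro x y; simp [Finset.sum_add_distrib]
      map_smul' := by intro c x; simp [Finset.mul_sum] } with hf
  set g : (Fin (m+1) → ℝ) →ₗ[ℝ] ℝ :=
    { toFun := fun v => ∑ i, (i.1 : ℝ) * v i
      map_add' := by intro x y; simp [mul_add, Finset.sum_add_distrib]
      map_smul' := by intro c x; simp [Finset.mul_sum]; ring_nf; simp [mul_comm, mul_left_comm]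
      } with hg
  set φ : (Fin (m+1) → ℝ) →ₗ[ℝ] ℝ × ℝ := f.prod g with hφ
  -- evaluation of φ on points of S
  have hφS : ∀ x ∈ S, φ x = ((k : ℝ), (m : ℝ)) := by
    rintro x ⟨s, h1, h2, rfl⟩
    have e1 : f (fun i => (s i : ℝ)) = (k : ℝ) := by
      simp only [hf, LinearMap.coe_mk, AddHom.coe_mk]
      exact_mod_cast h2
    have e2 : g (fun i => (s i : ℝ)) = (m : ℝ) := by
      simp only [hg, LinearMap.coe_mk, AddHom.coe_mk]
      exact_mod_cast h1
    simp [hφ, LinearMap.prod_apply, e1, e2]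
  -- upper bound: vectorSpan ≤ ker φ
  have hsub : vectorSpan ℝ S ≤ LinearMap.ker φ := by
    rw [vectorSpan_def]
    apply Submodule.span_le.2
    rintro v hv
    rw [Set.mem_vsub] at hv
    obtain ⟨x, hx, y, hy, rfl⟩ := hv
    have : φ (x -ᵥ y) = 0 := by
      rw [vsub_eq_sub, map_sub, hφS x hx, hφS y hy, sub_self]
    simpa [LinearMap.mem_ker] using this
  -- φ is surjective
  have hsurj : Function.Surjective φ := by
    intro p
    refine ⟨(fun x => (if x.1 = 0 then p.1 - p.2 else 0) + (if x.1 = 1 then p.2 else 0)), ?_⟩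
    have h0 : (0:ℕ) < m + 1 := by omega
    have h1 : (1:ℕ) < m + 1 := by omega
    have ef : f (fun x => (if x.1 = 0 then p.1 - p.2 else 0) + (if x.1 = 1 then p.2 else 0)) = p.1 := by
      simp only [hf, LinearMap.coe_mk, AddHom.coe_mk]
      rw [Finset.sum_add_distrib,
        aux_sum_ite 0 h0 Finset.univ (fun _ => p.1 - p.2),
        aux_sum_ite 1 h1 Finset.univ (fun _ => p.2)]
      simp
    have eg : g (fun x => (if x.1 = 0 then p.1 - p.2 else 0) + (if x.1 = 1 then p.2 else 0)) = p.2 := by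
      simp only [hg, LinearMap.coe_mk, AddHom.coe_mk]
      have : ∀ x : Fin (m+1), (x.1 : ℝ) * ((if x.1 = 0 then p.1 - p.2 else 0) + (if x.1 = 1 then p.2 else 0))
          = (if x.1 = 0 then (x.1:ℝ) * (p.1 - p.2) else 0) + (if x.1 = 1 then (x.1:ℝ) * p.2 else 0) := by
        intro x; split_ifs <;> ring
      rw [Finset.sum_congr rfl (fun x _ => this x), Finset.sum_add_distrib,
        aux_sum_ite 0 h0 Finset.univ (fun x => (x.1:ℝ) * (p.1 - p.2)),
        aux_sum_ite 1 h1 Finset.univ (fun x => (x.1:ℝ) * p.2)]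
      simp
    rw [hφ]; exact Prod.ext ef eg
  -- dimension of the kernel
  have hker : Module.finrank ℝ (LinearMap.ker φ) = m - 1 := by
    have hr := LinearMap.finrank_range_add_finrank_ker φ
    rw [LinearMap.range_eq_top.2 hsurj, finrank_top] at hr
    simp [Module.finrank_pi] at hr
    have : Module.finrank ℝ (ℝ × ℝ) = 2 := by simp
    omega
  -- difference vectors w_j
  set wvec : ℕ → (Fin (m+1) → ℝ) := fun j x =>
    (if x.1 = 1 then (1:ℝ) else 0) + (if x.1 = j-1 then 1 else 0)
      - (if x.1 = 0 then 1 else 0) - (if x.1 = j then 1 else 0) with hw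
  have hmem : ∀ j : ℕ, 2 ≤ j → j ≤ m → wvec j ∈ vectorSpan ℝ S := by
    intro j hj2 hjm
    set R : Fin (m+1) → ℕ := fun x =>
      (if x.1 = 0 then k-3 else 0) + (if x.1 = 1 then 1 else 0)
        + (if x.1 = m-j then 1 else 0) + (if x.1 = j-1 then 1 else 0) with hR
    set Q : Fin (m+1) → ℕ := fun x =>
      (if x.1 = 0 then k-2 else 0) + (if x.1 = m-j then 1 else 0)
        + (if x.1 = j then 1 else 0) with hQ
    have h0 : (0:ℕ) < m+1 := by omega
    have h1 : (1:ℕ) < m+1 := by omega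
    have hmj : m-j < m+1 := by omega
    have hj1 : j-1 < m+1 := by omega
    have hjlt : j < m+1 := by omega
    have hRmem : (fun i => (R i : ℝ)) ∈ S := by
      refine ⟨R, ?_, ?_, rfl⟩
      · have hx : ∀ x : Fin (m+1), x.1 * R x
            = (if x.1 = 0 then x.1*(k-3) else 0) + (if x.1 = 1 then x.1 else 0)
              + (if x.1 = m-j then x.1 else 0) + (if x.1 = j-1 then x.1 else 0) := by
          intro x; simp only [hR]; split_ifs <;> ring
        rw [Finset.sum_congr rfl (fun x _ => hx x)]
        rw [Finset.sum_add_distrib, Finset.sum_add_distrib, Finset.sum_add_distrib,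
          aux_sum_ite 0 h0 _ _, aux_sum_ite 1 h1 _ _, aux_sum_ite (m-j) hmj _ _,
          aux_sum_ite (j-1) hj1 _ _]
        simp only [Finset.mem_univ, if_true]
        omega
      · simp only [hR]
        rw [Finset.sum_add_distrib, Finset.sum_add_distrib, Finset.sum_add_distrib,
          aux_sum_ite 0 h0 _ _, aux_sum_ite 1 h1 _ _, aux_sum_ite (m-j) hmj _ _,
          aux_sum_ite (j-1) hj1 _ _]
        simp only [Finset.mem_univ, if_true]
        omega
    have hQmem : (fun i => (Q i : ℝ)) ∈ S := by
      refine ⟨Q, ?_, ?_, rfl⟩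
      · have hx : ∀ x : Fin (m+1), x.1 * Q x
            = (if x.1 = 0 then x.1*(k-2) else 0) + (if x.1 = m-j then x.1 else 0)
              + (if x.1 = j then x.1 else 0) := by
          intro x; simp only [hQ]; split_ifs <;> ring
        rw [Finset.sum_congr rfl (fun x _ => hx x)]
        rw [Finset.sum_add_distrib, Finset.sum_add_distrib,
          aux_sum_ite 0 h0 _ _, aux_sum_ite (m-j) hmj _ _, aux_sum_ite j hjlt _ _]
        simp only [Finset.mem_univ, if_true]
        omega
      · simp only [hQ]
        rw [Finset.sum_add_distrib, Finset.sum_add_distrib,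
          aux_sum_ite 0 h0 _ _, aux_sum_ite (m-j) hmj _ _, aux_sum_ite j hjlt _ _]
        simp only [Finset.mem_univ, if_true]
        omega
    have hdiff := vsub_mem_vectorSpan ℝ hRmem hQmem
    have heq : (fun i => (R i : ℝ)) -ᵥ (fun i => (Q i : ℝ)) = wvec j := by
      funext x
      simp only [vsub_eq_sub, Pi.sub_apply, hR, hQ, hw]
      push_cast [Nat.cast_sub hk, Nat.cast_sub (show 2 ≤ k by omega)]
      split_ifs <;> first | (exfalso; omega) | ring1
    rwa [heq] at hdiff
  -- partial-sum linear map
  set T : (Fin (m+1) → ℝ) →ₗ[ℝ] (Fin (m+1) → ℝ) :=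
    { toFun := fun v t => ∑ i ∈ Finset.univ.filter (fun i : Fin (m+1) => i.1 ≤ t.1), v i
      map_add' := by intro x y; funext t; simp [Finset.sum_add_distrib]
      map_smul' := by intro c x; funext t; simp [Finset.mul_sum] } with hT
  set U : Fin (m-1) → (Fin (m+1) → ℝ) := fun t s =>
    (if s.1 = t.1+1 then (1:ℝ) else 0) - (if s.1 = 0 then 1 else 0) with hU
  have hTw : ∀ j : ℕ, 2 ≤ j → j ≤ m →
      T (wvec j) = fun s : Fin (m+1) =>
        (if s.1 = j-1 then (1:ℝ) else 0) - (if s.1 = 0 then 1 else 0) := by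
    intro j hj2 hjm
    funext t
    have h0 : (0:ℕ) < m+1 := by omega
    have h1 : (1:ℕ) < m+1 := by omega
    have hj1 : j-1 < m+1 := by omega
    have hjlt : j < m+1 := by omega
    simp only [hT, LinearMap.coe_mk, AddHom.coe_mk, hw]
    rw [Finset.sum_sub_distrib, Finset.sum_sub_distrib, Finset.sum_add_distrib,
      aux_sum_ite 1 h1 _ _, aux_sum_ite (j-1) hj1 _ _, aux_sum_ite 0 h0 _ _,
      aux_sum_ite j hjlt _ _]
    simp only [Finset.mem_filter, Finset.mem_univ, true_and]
    split_ifs <;> first | (exfalso; omega) | ring1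
  have hUli : LinearIndependent ℝ U := by
    rw [Fintype.linearIndependent_iff]
    intro gc hgc t
    have ht1 : t.1+1 < m+1 := by have := t.2; omega
    have h := congrFun hgc (⟨t.1+1, ht1⟩ : Fin (m+1))
    simp only [hU, Finset.sum_apply, Pi.smul_apply, smul_eq_mul, Pi.zero_apply] at h
    have hsimp : ∀ b : Fin (m-1), gc b *
        ((if ((⟨t.1+1, ht1⟩ : Fin (m+1))).1 = b.1+1 then (1:ℝ) else 0)
          - (if ((⟨t.1+1, ht1⟩ : Fin (m+1))).1 = 0 then 1 else 0))
        = if b = t then gc b else 0 := by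
      intro b
      by_cases hbt : b = t
      · subst hbt; simp
      · have hvb : t.1 ≠ b.1 := fun hh => hbt (Fin.ext hh.symm)
        have c1 : ¬ (((⟨t.1+1, ht1⟩ : Fin (m+1))).1 = b.1+1) := by
          show ¬ (t.1+1 = b.1+1); omega
        have c2 : ¬ (((⟨t.1+1, ht1⟩ : Fin (m+1))).1 = 0) := by
          show ¬ (t.1+1 = 0); omega
        simp [c1, c2, hbt, hvb]
    rw [Finset.sum_congr rfl (fun b _ => hsimp b), Finset.sum_ite_eq' _ t] at h
    simpa using h
  have hWli : LinearIndependent ℝ (fun t : Fin (m-1) => wvec (t.1+2)) := by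
    apply LinearIndependent.of_comp T
    have hcomp : (⇑T ∘ fun t : Fin (m-1) => wvec (t.1+2)) = U := by
      funext t
      have h2 : 2 ≤ t.1+2 := by omega
      have hle : t.1+2 ≤ m := by have := t.2; omega
      rw [Function.comp_apply, hTw (t.1+2) h2 hle]
      rfl
    rw [hcomp]
    exact hUli
  have hWmem : ∀ t : Fin (m-1), wvec (t.1+2) ∈ vectorSpan ℝ S := by
    intro t
    exact hmem _ (by omega) (by have := t.2; omega)
  have hlow : m - 1 ≤ Module.finrank ℝ (vectorSpan ℝ S) := by
    have hli' : LinearIndependent ℝ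
        (fun t : Fin (m-1) => (⟨wvec (t.1+2), hWmem t⟩ : vectorSpan ℝ S)) := by
      apply LinearIndependent.of_comp (vectorSpan ℝ S).subtype
      exact hWli
    simpa using hli'.fintype_card_le_finrank
  have hupp : Module.finrank ℝ (vectorSpan ℝ S) ≤ m - 1 := by
    calc Module.finrank ℝ (vectorSpan ℝ S) ≤ Module.finrank ℝ (LinearMap.ker φ) :=
          Submodule.finrank_mono hsub
      _ = m - 1 := hker
  omega
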